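/- Let φ be an automorphism of S₆ = Equiv.Perm (Fin 6) that is not inner. Then φ maps every transposition to a product of three disjoint transpositions: for every τ ∈ Equiv.Perm (Fin 6) with cycle type {2}, the permutation φ(τ) has cycle type {2, 2, 2}. Consequently φ restricts to a bijection between the 15 transpositions and the 15 elements of cycle type 2+2+2. -/
import Mathlib

open Equiv Equiv.Perm

namespace S6Aux

/-- decide facts over Fin 6 -/
lemma cube_eq_one : ∀ u v : Fin 6, u ≠ 0 → v ≠ 0 →
    (swap (0 : Fin 6) u * swap 0 v) ^ 3 = 1 := by decide

lemma swap_cube_share : ∀ a b c d : Fin 6, a ≠ b → c ≠ d →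
    (swap a b * swap c d) ^ 3 = 1 → (a = c ∨ a = d ∨ b = c ∨ b = d) := by decide

lemma swap_decomp : ∀ u v : Fin 6, u ≠ 0 → v ≠ 0 → u ≠ v →
    swap (0 : Fin 6) u * swap 0 v * swap 0 u = swap u v := by decide

/-- cycle type of an involution -/
lemma sq_cycleType {σ : Perm (Fin 6)} (h : σ * σ = 1) :
    σ.cycleType = Multiset.replicate (σ.support.card / 2) 2 := by
  have h2 : ∀ n ∈ σ.cycleType, n = 2 := by
    intro n hn
    have hlcm : σ.cycleType.lcm ∣ 2 := by
      rw [Equiv.Perm.lcm_cycleType, orderOf_dvd_iff_pow_eq_one, pow_two]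
      exact h
    have hd : n ∣ 2 := dvd_trans (Multiset.dvd_lcm hn) hlcm
    have h1 := Equiv.Perm.two_le_of_mem_cycleType hn
    have := Nat.le_of_dvd (by norm_num) hd
    omega
  have hrep : σ.cycleType = Multiset.replicate (Multiset.card σ.cycleType) 2 :=
    Multiset.eq_replicate_card.mpr h2
  have hsum := Equiv.Perm.sum_cycleType σ
  rw [hrep] at hsum
  rw [Multiset.sum_replicate, smul_eq_mul] at hsum
  rw [hrep]
  congr 1
  omega

lemma ct_iff (σ : Perm (Fin 6)) (m : ℕ) :
    σ.cycleType = Multiset.replicate m 2 ↔ (σ * σ = 1 ∧ σ.support.card = 2 * m) := by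
  constructor
  · intro hct
    have hsq : σ * σ = 1 := by
      rw [← pow_two, ← orderOf_dvd_iff_pow_eq_one, ← Equiv.Perm.lcm_cycleType, hct]
      exact Multiset.lcm_dvd.mpr fun a ha => by
        rw [Multiset.eq_of_mem_replicate ha]
    refine ⟨hsq, ?_⟩
    have hsum := Equiv.Perm.sum_cycleType σ
    rw [hct, Multiset.sum_replicate, smul_eq_mul] at hsum
    omega
  · rintro ⟨hsq, hcard⟩
    rw [sq_cycleType hsq, hcard]
    congr 1
    omega

lemma swap_cycleType {x y : Fin 6} (h : x ≠ y) : (swap x y).cycleType = {2} := by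
  rw [← Multiset.replicate_one, ct_iff]
  exact ⟨swap_mul_self x y, by rw [Equiv.Perm.card_support_eq_two.mpr ⟨x, y, h, rfl⟩]⟩

lemma isSwap_of_cycleType {σ : Perm (Fin 6)} (h : σ.cycleType = {2}) : σ.IsSwap := by
  rw [← Multiset.replicate_one, ct_iff] at h
  exact Equiv.Perm.card_support_eq_two.mp (by omega)

lemma swap_eq_of_support {σ τ : Perm (Fin 6)} (hσ : σ.IsSwap) (hτ : τ.IsSwap)
    (h : σ.support = τ.support) : σ = τ := by
  obtain ⟨x, y, hxy, rfl⟩ := hσ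
  obtain ⟨u, v, huv, rfl⟩ := hτ
  rw [Equiv.Perm.support_swap hxy, Equiv.Perm.support_swap huv] at h
  have hx : x = u ∨ x = v := by
    have : x ∈ ({u, v} : Finset (Fin 6)) := h ▸ (by simp)
    simpa using this
  have hy : y = u ∨ y = v := by
    have : y ∈ ({u, v} : Finset (Fin 6)) := h ▸ (by simp)
    simpa using this
  rcases hx with rfl | rfl <;> rcases hy with rfl | rfl
  · exact absurd rfl hxy
  · rfl
  · exact swap_comm _ _
  · exact absurd rfl hxy

lemma swap_eq_of_mem_support {σ : Perm (Fin 6)} {c : Fin 6} (hσ : σ.IsSwap)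
    (hc : c ∈ σ.support) : σ = swap c (σ c) := by
  obtain ⟨x, y, hxy, rfl⟩ := hσ
  rw [Equiv.Perm.support_swap hxy] at hc
  simp only [Finset.mem_insert, Finset.mem_singleton] at hc
  rcases hc with rfl | rfl
  · rw [swap_apply_left]
  · rw [swap_apply_right, swap_comm]

/-- five pairwise-intersecting distinct pairs in `Fin 6` have a common point -/
lemma common_point (P : Fin 6 → Finset (Fin 6))
    (hcard : ∀ i, i ≠ 0 → (P i).card = 2)
    (hne : ∀ i j, i ≠ 0 → j ≠ 0 → i ≠ j → P i ≠ P j)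
    (hint : ∀ i j, i ≠ 0 → j ≠ 0 → i ≠ j → (P i ∩ P j).Nonempty) :
    ∃ c, ∀ i, i ≠ 0 → c ∈ P i := by
  obtain ⟨p, hp⟩ := hint 1 2 (by decide) (by decide) (by decide)
  rw [Finset.mem_inter] at hp
  by_cases hall : ∀ i, i ≠ 0 → p ∈ P i
  · exact ⟨p, hall⟩
  push_neg at hall
  obtain ⟨k, hk0, hkp⟩ := hall
  have hk1 : k ≠ 1 := by rintro rfl; exact hkp hp.1
  have hk2 : k ≠ 2 := by rintro rfl; exact hkp hp.2
  -- extract the second points of P 1 and P 2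
  have hu : ∃ u, P 1 = {p, u} ∧ p ≠ u := by
    obtain ⟨a, b, hab, h1⟩ := Finset.card_eq_two.mp (hcard 1 (by decide))
    have hp1 : p = a ∨ p = b := by
      have := hp.1; rw [h1] at this; simpa using this
    rcases hp1 with rfl | rfl
    · exact ⟨b, h1, hab⟩
    · exact ⟨a, by rw [h1, Finset.pair_comm], hab.symm⟩
  have hv : ∃ v, P 2 = {p, v} ∧ p ≠ v := by
    obtain ⟨a, b, hab, h1⟩ := Finset.card_eq_two.mp (hcard 2 (by decide))
    have hp1 : p = a ∨ p = b := by
      have := hp.2; rw [h1] at this; simpa using this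
    rcases hp1 with rfl | rfl
    · exact ⟨b, h1, hab⟩
    · exact ⟨a, by rw [h1, Finset.pair_comm], hab.symm⟩
  obtain ⟨u, hP1, hpu⟩ := hu
  obtain ⟨v, hP2, hpv⟩ := hv
  have huv : u ≠ v := by
    rintro rfl
    exact hne 1 2 (by decide) (by decide) (by decide) (hP1.trans hP2.symm)
  -- any pair avoiding p equals {u, v}
  have key : ∀ m, m ≠ 0 → m ≠ 1 → m ≠ 2 → p ∉ P m → P m = {u, v} := by
    intro m hm0 hm1 hm2 hmp
    have hu_m : u ∈ P m := by
      obtain ⟨q, hq⟩ := hint 1 m (by decide) hm0 (Ne.symm hm1)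
      rw [Finset.mem_inter, hP1] at hq
      have : q = p ∨ q = u := by simpa using hq.1
      rcases this with rfl | rfl
      · exact absurd hq.2 hmp
      · exact hq.2
    have hv_m : v ∈ P m := by
      obtain ⟨q, hq⟩ := hint 2 m (by decide) hm0 (Ne.symm hm2)
      rw [Finset.mem_inter, hP2] at hq
      have : q = p ∨ q = v := by simpa using hq.1
      rcases this with rfl | rfl
      · exact absurd hq.2 hmp
      · exact hq.2
    refine (Finset.eq_of_subset_of_card_le ?_ ?_).symm
    · intro r hr
      simp only [Finset.mem_insert, Finset.mem_singleton] at hr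
      rcases hr with rfl | rfl
      exacts [hu_m, hv_m]
    · rw [hcard m hm0, Finset.card_pair huv]
  have hPk : P k = {u, v} := key k hk0 hk1 hk2 hkp
  obtain ⟨l, hl0, hl1, hl2, hlk⟩ : ∃ l : Fin 6, l ≠ 0 ∧ l ≠ 1 ∧ l ≠ 2 ∧ l ≠ k := by
    have : ∀ k' : Fin 6, ∃ l : Fin 6, l ≠ 0 ∧ l ≠ 1 ∧ l ≠ 2 ∧ l ≠ k' := by decide
    exact this k
  by_cases hpl : p ∈ P l
  · obtain ⟨q, hq⟩ := hint l k hl0 hk0 hlk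
    rw [Finset.mem_inter] at hq
    have hquv : q = u ∨ q = v := by
      have := hq.2; rw [hPk] at this; simpa using this
    have hpq : p ≠ q := by rintro rfl; exact hkp hq.2
    have hPl : P l = {p, q} := by
      refine (Finset.eq_of_subset_of_card_le ?_ ?_).symm
      · intro r hr
        simp only [Finset.mem_insert, Finset.mem_singleton] at hr
        rcases hr with rfl | rfl
        exacts [hpl, hq.1]
      · rw [hcard l hl0, Finset.card_pair hpq]
    rcases hquv with rfl | rfl
    · exact absurd (hPl.trans hP1.symm) (hne l 1 hl0 (by decide) hl1)
    · exact absurd (hPl.trans hP2.symm) (hne l 2 hl0 (by decide) hl2)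
  · exact absurd ((key l hl0 hl1 hl2 hpl).trans hPk.symm) (hne l k hl0 hk0 hlk)

lemma inner_of_swap_preserving (φ : MulAut (Equiv.Perm (Fin 6)))
    (h : ∀ τ : Perm (Fin 6), τ.cycleType = {2} → (φ τ).cycleType = {2}) :
    ∃ g : Perm (Fin 6), ∀ x, φ x = g * x * g⁻¹ := by
  classical
  have hswap : ∀ j : Fin 6, j ≠ 0 → (φ (swap 0 j)).IsSwap := fun j hj =>
    isSwap_of_cycleType (h _ (swap_cycleType (Ne.symm hj)))
  have hφinj : Function.Injective φ := φ.injective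
  have hswapne : ∀ i j : Fin 6, i ≠ 0 → j ≠ 0 → i ≠ j →
      φ (swap 0 i) ≠ φ (swap 0 j) := by
    intro i j hi hj hij hEq
    have h1 : swap (0 : Fin 6) i = swap 0 j := hφinj hEq
    have := congrArg (fun σ : Perm (Fin 6) => σ i) h1
    simp only [swap_apply_right] at this
    rw [swap_apply_of_ne_of_ne hi hij] at this
    exact hi this.symm
  set P : Fin 6 → Finset (Fin 6) := fun j => (φ (swap 0 j)).support with hPdef
  have hcard : ∀ i, i ≠ 0 → (P i).card = 2 := fun i hi =>
    Equiv.Perm.card_support_eq_two.mpr (hswap i hi)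
  have hne : ∀ i j, i ≠ 0 → j ≠ 0 → i ≠ j → P i ≠ P j := by
    intro i j hi hj hij hEq
    exact hswapne i j hi hj hij (swap_eq_of_support (hswap i hi) (hswap j hj) hEq)
  have hint : ∀ i j, i ≠ 0 → j ≠ 0 → i ≠ j → (P i ∩ P j).Nonempty := by
    intro i j hi hj hij
    obtain ⟨x, y, hxy, hx⟩ := hswap i hi
    obtain ⟨u, v, huv, hu⟩ := hswap j hj
    have hcube : (φ (swap 0 i) * φ (swap 0 j)) ^ 3 = 1 := by
      rw [← map_mul, ← map_pow, cube_eq_one i j hi hj, map_one]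
    rw [hx, hu] at hcube
    have hshare := swap_cube_share x y u v hxy huv hcube
    have hPi : P i = {x, y} := by rw [hPdef]; simp only; rw [hx, Equiv.Perm.support_swap hxy]
    have hPj : P j = {u, v} := by rw [hPdef]; simp only; rw [hu, Equiv.Perm.support_swap huv]
    rcases hshare with rfl | rfl | rfl | rfl
    · exact ⟨x, by rw [Finset.mem_inter, hPi, hPj]; simp⟩
    · exact ⟨x, by rw [Finset.mem_inter, hPi, hPj]; simp⟩
    · exact ⟨y, by rw [Finset.mem_inter, hPi, hPj]; simp⟩
    · exact ⟨y, by rw [Finset.mem_inter, hPi, hPj]; simp⟩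
  obtain ⟨c, hc⟩ := common_point P hcard hne hint
  have himg : ∀ j, j ≠ 0 → φ (swap 0 j) = swap c (φ (swap 0 j) c) := fun j hj =>
    swap_eq_of_mem_support (hswap j hj) (hc j hj)
  have hfix : ∀ j, j ≠ 0 → φ (swap 0 j) c ≠ c := fun j hj =>
    Equiv.Perm.mem_support.mp (hc j hj)
  set f : Fin 6 → Fin 6 := fun j => if j = 0 then c else φ (swap 0 j) c with hfdef
  have hinj : Function.Injective f := by
    intro i j hij
    by_cases hi : i = 0 <;> by_cases hj : j = 0
    · rw [hi, hj]
    · exfalso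
      simp only [hfdef, if_pos hi, if_neg hj] at hij
      exact hfix j hj hij.symm
    · exfalso
      simp only [hfdef, if_neg hi, if_pos hj] at hij
      exact hfix i hi hij
    · simp only [hfdef, if_neg hi, if_neg hj] at hij
      have hEq : φ (swap 0 i) = φ (swap 0 j) := by
        rw [himg i hi, himg j hj, hij]
      have h1 : swap (0 : Fin 6) i = swap 0 j := hφinj hEq
      have := congrArg (fun σ : Perm (Fin 6) => σ 0) h1
      simpa using this
  let g : Perm (Fin 6) := Equiv.ofBijective f (Finite.injective_iff_bijective.mp hinj)
  have hg0 : g 0 = c := by simp [g, hfdef, Equiv.ofBijective]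
  have hgj : ∀ j, j ≠ 0 → g j = φ (swap 0 j) c := by
    intro j hj; simp [g, hfdef, Equiv.ofBijective, hj]
  have hkey : ∀ j, j ≠ 0 → φ (swap 0 j) = g * swap 0 j * g⁻¹ := by
    intro j hj
    rw [← swap_apply_apply g 0 j, hg0, hgj j hj]
    exact himg j hj
  have hswapconj : ∀ σ : Perm (Fin 6), σ.IsSwap → φ σ = g * σ * g⁻¹ := by
    rintro σ ⟨u, v, huv, rfl⟩
    by_cases hu : u = 0
    · subst hu
      have hv : v ≠ 0 := Ne.symm huv
      exact hkey v hv
    · by_cases hv : v = 0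
      · subst hv
        rw [swap_comm]
        exact hkey u hu
      · have hdec := swap_decomp u v hu hv huv
        calc φ (swap u v) = φ (swap 0 u * swap 0 v * swap 0 u) := by rw [hdec]
          _ = φ (swap 0 u) * φ (swap 0 v) * φ (swap 0 u) := by rw [map_mul, map_mul]
          _ = (g * swap 0 u * g⁻¹) * (g * swap 0 v * g⁻¹) * (g * swap 0 u * g⁻¹) := by
              rw [hkey u hu, hkey v hv]
          _ = g * (swap 0 u * swap 0 v * swap 0 u) * g⁻¹ := by group
          _ = g * swap u v * g⁻¹ := by rw [hdec]
  refine ⟨g, fun x => ?_⟩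
  have hx : x ∈ Subgroup.closure {σ : Perm (Fin 6) | σ.IsSwap} := by
    rw [Equiv.Perm.closure_isSwap]; exact Subgroup.mem_top x
  refine Subgroup.closure_induction (p := fun y _ => φ y = g * y * g⁻¹)
    (fun y hy => hswapconj y hy) (by simp) ?_ ?_ hx
  · intro a b _ _ ha hb
    rw [map_mul, ha, hb]; group
  · intro a _ ha
    rw [map_inv, ha]; group

noncomputable abbrev S (t : Multiset ℕ) : Finset (Perm (Fin 6)) :=
  Finset.univ.filter (fun σ : Perm (Fin 6) => σ.cycleType = t)

lemma mem_S {σ : Perm (Fin 6)} {t : Multiset ℕ} : σ ∈ S t ↔ σ.cycleType = t := by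
  simp [S]

lemma card_S_repl (m : ℕ) :
    (S (Multiset.replicate m 2)).card =
      (Finset.univ.filter (fun σ : Perm (Fin 6) =>
        σ * σ = 1 ∧ σ.support.card = 2 * m)).card := by
  congr 1
  ext σ
  simp only [Finset.mem_filter, Finset.mem_univ, true_and]
  exact ct_iff σ m

lemma card_S2 : (S {2}).card = 15 := by
  rw [show ({2} : Multiset ℕ) = Multiset.replicate 1 2 from rfl, card_S_repl]
  decide

lemma card_S22 : (S {2, 2}).card = 45 := by
  rw [show ({2, 2} : Multiset ℕ) = Multiset.replicate 2 2 from rfl, card_S_repl]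
  decide

lemma class_image (φ : MulAut (Equiv.Perm (Fin 6))) (τ : Perm (Fin 6)) :
    (S τ.cycleType).image φ = S (φ τ).cycleType := by
  ext σ
  simp only [Finset.mem_image]
  constructor
  · rintro ⟨ρ, hρ, rfl⟩
    rw [mem_S] at hρ ⊢
    have hconj : IsConj ρ τ := Equiv.Perm.isConj_iff_cycleType_eq.mpr hρ
    exact Equiv.Perm.isConj_iff_cycleType_eq.mp (φ.toMonoidHom.map_isConj hconj)
  · intro hσ
    rw [mem_S] at hσ
    have hconj : IsConj (φ τ) σ := Equiv.Perm.isConj_iff_cycleType_eq.mpr hσ.symm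
    obtain ⟨z, hz⟩ := isConj_iff.mp hconj
    refine ⟨φ.symm z * τ * (φ.symm z)⁻¹, mem_S.mpr ?_, ?_⟩
    · have hc2 : IsConj τ (φ.symm z * τ * (φ.symm z)⁻¹) := isConj_iff.mpr ⟨φ.symm z, rfl⟩
      exact (Equiv.Perm.isConj_iff_cycleType_eq.mp hc2).symm
    · rw [map_mul, map_mul, map_inv, MulEquiv.apply_symm_apply]
      exact hz


end S6Aux

open S6Aux in
/-- A non-inner automorphism of `S₆` sends every transposition to a product of
three disjoint transpositions, and hence restricts to a bijection between the
15 transpositions and the 15 elements of cycle type `2 + 2 + 2`. -/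
theorem nonInner_aut_transposition_image
    (φ : MulAut (Equiv.Perm (Fin 6)))
    (hφ : ¬ ∃ g : Equiv.Perm (Fin 6), ∀ x : Equiv.Perm (Fin 6),
      φ x = g * x * g⁻¹) :
    (∀ τ : Equiv.Perm (Fin 6), τ.cycleType = {2} →
      (φ τ).cycleType = {2, 2, 2}) ∧
    Set.BijOn (⇑φ) {τ : Equiv.Perm (Fin 6) | τ.cycleType = {2}}
      {σ : Equiv.Perm (Fin 6) | σ.cycleType = {2, 2, 2}} := by
  classical
  set τ0 : Perm (Fin 6) := swap 0 1 with hτ0def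
  have hτ0 : τ0.cycleType = {2} := swap_cycleType (by decide)
  -- all transpositions have the same image type
  have hA : ∀ τ : Perm (Fin 6), τ.cycleType = {2} →
      (φ τ).cycleType = (φ τ0).cycleType := by
    intro τ hτ
    have hconj : IsConj τ τ0 := Equiv.Perm.isConj_iff_cycleType_eq.mpr (hτ.trans hτ0.symm)
    exact Equiv.Perm.isConj_iff_cycleType_eq.mp (φ.toMonoidHom.map_isConj hconj)
  -- the image of τ0 is an involution
  have hsq : φ τ0 * φ τ0 = 1 := by
    rw [← map_mul, hτ0def, swap_mul_self, map_one]
  have ht : (φ τ0).cycleType = Multiset.replicate ((φ τ0).support.card / 2) 2 :=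
    sq_cycleType hsq
  set m := (φ τ0).support.card / 2 with hmdef
  -- m ∈ {1, 2, 3}
  have hm : m = 1 ∨ m = 2 ∨ m = 3 := by
    have hct := (ct_iff (φ τ0) m).mp ht
    have hle : (φ τ0).support.card ≤ 6 := by
      have := Finset.card_le_univ (φ τ0).support
      simpa using this
    have hne1 : φ τ0 ≠ 1 := by
      intro hh
      have : τ0 = 1 := φ.injective (by rw [hh, map_one])
      rw [hτ0def] at this
      exact absurd this (by decide)
    have hpos : (φ τ0).support.card ≠ 0 := by
      intro hh
      exact hne1 (Equiv.Perm.support_eq_empty_iff.mp (Finset.card_eq_zero.mp hh))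
    omega
  -- the image of the class of transpositions
  have himgτ0 : (S {2}).image φ = S (φ τ0).cycleType := by
    rw [← hτ0]; exact class_image φ τ0
  have hcards : (S (φ τ0).cycleType).card = 15 := by
    rw [← himgτ0, Finset.card_image_of_injective _ φ.injective, card_S2]
  -- rule out m = 2
  have hm2 : m ≠ 2 := by
    intro hh
    rw [ht, hh] at hcards
    rw [show Multiset.replicate 2 2 = ({2, 2} : Multiset ℕ) from rfl] at hcards
    rw [card_S22] at hcards
    exact absurd hcards (by norm_num)
  -- rule out m = 1
  have hm1 : m ≠ 1 := by
    intro hh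
    apply hφ
    apply inner_of_swap_preserving φ
    intro τ hτ
    rw [hA τ hτ, ht, hh]
    rfl
  have hm3 : m = 3 := by omega
  have ht3 : (φ τ0).cycleType = {2, 2, 2} := by
    rw [ht, hm3]; rfl
  have part1 : ∀ τ : Perm (Fin 6), τ.cycleType = {2} → (φ τ).cycleType = {2, 2, 2} :=
    fun τ hτ => (hA τ hτ).trans ht3
  refine ⟨part1, ?_, ?_, ?_⟩
  · intro τ hτ
    exact part1 τ hτ
  · exact φ.injective.injOn
  · -- surjectivity
    intro σ hσ
    have hσct : σ.cycleType = {2, 2, 2} := hσ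
    have : σ ∈ S (φ τ0).cycleType := mem_S.mpr (hσct.trans ht3.symm)
    rw [← himgτ0] at this
    obtain ⟨τ, hτ, hτσ⟩ := Finset.mem_image.mp this
    exact ⟨τ, mem_S.mp hτ, hτσ⟩
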